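/- Let h : ℝⁿ → [0,∞) be integrable and h* its symmetric decreasing rearrangement. Then ∫_{ℝⁿ} |x|⁴ h(x) dx ≥ ∫_{ℝⁿ} |x|⁴ h*(x) dx. -/

import Mathlib

open MeasureTheory Set

/-- Bathtub-type lemma: if `B`-elements have weight ≤ all non-`B` elements, and
`μ A = μ B < ∞`, then `∫⁻ w` over `B` is at most `∫⁻ w` over `A`. -/
lemma bathtub {E : Type*} [MeasurableSpace E] (μ : Measure E) (w : E → ENNReal)
    (A B : Set E) (hA : MeasurableSet A) (hB : MeasurableSet B)
    (hμ : μ A = μ B) (hfin : μ A ≠ ⊤)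
    (hord : ∀ x ∈ B, ∀ y ∉ B, w x ≤ w y) :
    ∫⁻ x in B, w x ∂μ ≤ ∫⁻ x in A, w x ∂μ := by
  set c : ENNReal := ⨅ y : ↥Bᶜ, w y with hc
  have hcB : ∀ x ∈ B, w x ≤ c := fun x hx =>
    le_iInf fun y => hord x hx y y.2
  have hcA : ∀ y ∉ B, c ≤ w y := fun y hy => iInf_le (fun y : ↥Bᶜ => w y) ⟨y, hy⟩
  have hdiff : μ (A \ B) = μ (B \ A) := by
    have h1 : μ (A ∩ B) + μ (A \ B) = μ A := measure_inter_add_diff A hB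
    have h2 : μ (B ∩ A) + μ (B \ A) = μ B := measure_inter_add_diff B hA
    rw [Set.inter_comm] at h2
    have hABfin : μ (A ∩ B) ≠ ⊤ :=
      fun hh => hfin (top_le_iff.mp (hh ▸ measure_mono Set.inter_subset_left))
    have : μ (A ∩ B) + μ (A \ B) = μ (A ∩ B) + μ (B \ A) := by
      rw [h1, h2, hμ]
    exact (ENNReal.add_right_inj hABfin).mp this
  have hBA : ∫⁻ x in B \ A, w x ∂μ ≤ c * μ (B \ A) := by
    calc ∫⁻ x in B \ A, w x ∂μ ≤ ∫⁻ _ in B \ A, c ∂μ := by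
          refine lintegral_mono_ae ?_
          filter_upwards [ae_restrict_mem (hB.diff hA)] with x hx
          exact hcB x hx.1
      _ = c * μ (B \ A) := setLIntegral_const _ _
  have hAB : c * μ (A \ B) ≤ ∫⁻ x in A \ B, w x ∂μ := by
    calc c * μ (A \ B) = ∫⁻ _ in A \ B, c ∂μ := (setLIntegral_const _ _).symm
      _ ≤ ∫⁻ x in A \ B, w x ∂μ := by
          refine lintegral_mono_ae ?_
          filter_upwards [ae_restrict_mem (hA.diff hB)] with x hx
          exact hcA x hx.2
  have e1 : ∫⁻ x in B ∩ A, w x ∂μ + ∫⁻ x in B \ A, w x ∂μ = ∫⁻ x in B, w x ∂μ :=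
    lintegral_inter_add_diff w B hA
  have e2 : ∫⁻ x in A ∩ B, w x ∂μ + ∫⁻ x in A \ B, w x ∂μ = ∫⁻ x in A, w x ∂μ :=
    lintegral_inter_add_diff w A hB
  calc ∫⁻ x in B, w x ∂μ = ∫⁻ x in A ∩ B, w x ∂μ + ∫⁻ x in B \ A, w x ∂μ := by
        rw [← e1, Set.inter_comm]
    _ ≤ ∫⁻ x in A ∩ B, w x ∂μ + c * μ (B \ A) := add_le_add_right hBA _
    _ = ∫⁻ x in A ∩ B, w x ∂μ + c * μ (A \ B) := by rw [hdiff]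
    _ ≤ ∫⁻ x in A ∩ B, w x ∂μ + ∫⁻ x in A \ B, w x ∂μ := add_le_add_right hAB _
    _ = ∫⁻ x in A, w x ∂μ := e2

/-- Hardy–Littlewood-type inequality (2.3) for the radially increasing weight `|x|⁴`. -/
theorem hardy_littlewood_weight (n : ℕ) (h : EuclideanSpace ℝ (Fin n) → ℝ)
    (hnn : ∀ x, 0 ≤ h x) (hint : Integrable h)
    (g : ℝ → ℝ) (hg : Antitone g) (hgnn : ∀ s, 0 ≤ g s)
    (hequi : ∀ t, 0 < t →
      volume {x | t < h x} = volume {x : EuclideanSpace ℝ (Fin n) | t < g ‖x‖}) :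
    ∫⁻ x, ENNReal.ofReal (‖x‖ ^ 4 * h x) ≥
      ∫⁻ x : EuclideanSpace ℝ (Fin n), ENNReal.ofReal (‖x‖ ^ 4 * g ‖x‖) := by
  classical
  set μ : Measure (EuclideanSpace ℝ (Fin n)) := volume
  set w : EuclideanSpace ℝ (Fin n) → ENNReal := fun x => ENNReal.ofReal (‖x‖ ^ 4) with hwdef
  have hwmeas : Measurable w := by
    exact (measurable_norm.pow measurable_const).ennreal_ofReal
  set ν : Measure (EuclideanSpace ℝ (Fin n)) := μ.withDensity w with hν
  have hνac : ν ≪ μ := withDensity_absolutelyContinuous μ w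
  have hmeas_h : AEMeasurable h μ := hint.aemeasurable
  -- measurable representative of h
  set h' : EuclideanSpace ℝ (Fin n) → ℝ := hmeas_h.mk h with hh'
  have hh'meas : Measurable h' := hmeas_h.measurable_mk
  have hhae : h =ᵐ[μ] h' := hmeas_h.ae_eq_mk
  have hgm : Measurable fun x : EuclideanSpace ℝ (Fin n) => g ‖x‖ :=
    hg.measurable.comp measurable_norm
  -- rewrite both sides via withDensity
  have hLHS : ∫⁻ x, ENNReal.ofReal (‖x‖ ^ 4 * h x) ∂μ
      = ∫⁻ x, ENNReal.ofReal (h x) ∂ν := by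
    rw [hν, lintegral_withDensity_eq_lintegral_mul₀ hwmeas.aemeasurable
      hmeas_h.ennreal_ofReal]
    refine lintegral_congr fun x => ?_
    simp [hwdef, ENNReal.ofReal_mul (by positivity : (0:ℝ) ≤ ‖x‖ ^ 4)]
  have hRHS : ∫⁻ x, ENNReal.ofReal (‖x‖ ^ 4 * g ‖x‖) ∂μ
      = ∫⁻ x, ENNReal.ofReal (g ‖x‖) ∂ν := by
    rw [hν, lintegral_withDensity_eq_lintegral_mul₀ hwmeas.aemeasurable
      hgm.ennreal_ofReal.aemeasurable]
    refine lintegral_congr fun x => ?_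
    simp [hwdef, ENNReal.ofReal_mul (by positivity : (0:ℝ) ≤ ‖x‖ ^ 4)]
  -- layer cake for both sides w.r.t. ν
  have hlayer_h : ∫⁻ x, ENNReal.ofReal (h x) ∂ν
      = ∫⁻ t in Ioi (0:ℝ), ν {x | t < h x} :=
    lintegral_eq_lintegral_meas_lt ν (Filter.Eventually.of_forall hnn)
      (hmeas_h.mono' hνac)
  have hlayer_g : ∫⁻ x, ENNReal.ofReal (g ‖x‖) ∂ν
      = ∫⁻ t in Ioi (0:ℝ), ν {x | t < g ‖x‖} :=
    lintegral_eq_lintegral_meas_lt ν (Filter.Eventually.of_forall fun x => hgnn _)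
      hgm.aemeasurable
  rw [ge_iff_le, hLHS, hRHS, hlayer_h, hlayer_g]
  refine lintegral_mono_ae ?_
  filter_upwards [ae_restrict_mem measurableSet_Ioi] with t ht
  -- replace h by its measurable representative
  have hsetae : {x | t < h x} =ᵐ[μ] {x | t < h' x} := by
    filter_upwards [hhae] with x hx
    exact congrArg (t < ·) hx
  have hμeq : μ {x | t < h' x} = μ {x | t < g ‖x‖} := by
    rw [← measure_congr hsetae]; exact hequi t ht
  have hνeq : ν {x | t < h x} = ν {x | t < h' x} :=
    measure_congr (hνac.ae_eq hsetae)
  -- finiteness of the level set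
  have hfin : μ {x | t < h' x} ≠ ⊤ := by
    intro htop
    have hsub : {x | t < h' x} ⊆ {x | ENNReal.ofReal t ≤ ENNReal.ofReal (h' x)} :=
      fun x hx => ENNReal.ofReal_le_ofReal hx.le
    have hmark : ENNReal.ofReal t * μ {x | ENNReal.ofReal t ≤ ENNReal.ofReal (h' x)}
        ≤ ∫⁻ x, ENNReal.ofReal (h' x) ∂μ :=
      mul_meas_ge_le_lintegral₀ hh'meas.ennreal_ofReal.aemeasurable _
    have hlt : ∫⁻ x, ENNReal.ofReal (h' x) ∂μ < ⊤ := by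
      have hcongr : (fun x => ENNReal.ofReal (h x)) =ᵐ[μ] fun x => ENNReal.ofReal (h' x) :=
        hhae.mono fun x hx => by simp only []; rw [hx]
      rw [← lintegral_congr_ae hcongr]
      exact (hasFiniteIntegral_iff_ofReal
        (Filter.Eventually.of_forall hnn)).mp hint.hasFiniteIntegral
    have h1 : μ {x | ENNReal.ofReal t ≤ ENNReal.ofReal (h' x)} = ⊤ :=
      top_le_iff.mp (htop ▸ measure_mono hsub)
    rw [h1, ENNReal.mul_top (ENNReal.ofReal_pos.mpr ht).ne'] at hmark
    · exact (hlt.ne (top_le_iff.mp hmark)).elim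
  -- the superlevel set of g∘norm is "ball-like"
  have hord : ∀ x ∈ {x : EuclideanSpace ℝ (Fin n) | t < g ‖x‖},
      ∀ y ∉ {x : EuclideanSpace ℝ (Fin n) | t < g ‖x‖}, w x ≤ w y := by
    intro x hx y hy
    have hxy : ‖x‖ ≤ ‖y‖ := by
      by_contra hcon
      exact hy (lt_of_lt_of_le hx (hg (le_of_not_ge hcon)))
    exact ENNReal.ofReal_le_ofReal (pow_le_pow_left₀ (norm_nonneg x) hxy 4)
  have hAmeas : MeasurableSet {x | t < h' x} := measurableSet_lt measurable_const hh'meas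
  have hBmeas : MeasurableSet {x | t < g ‖x‖} := measurableSet_lt measurable_const hgm
  have key : ν {x | t < g ‖x‖} ≤ ν {x | t < h' x} := by
    rw [hν, withDensity_apply _ hBmeas, withDensity_apply _ hAmeas]
    exact bathtub μ w _ _ hAmeas hBmeas hμeq hfin hord
  rw [hνeq]; exact key
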